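/- Let K be a finite index set, C a positive real, and d : K → ℂ demands with Re d_k ≥ 0 and Im d_k ≥ 0 for every k ∈ K. If S ⊆ K satisfies |Σ_{k∈S} d_k| ≤ C, then there is at most one k ∈ S with Re d_k + Im d_k > C. Equivalently, for any two distinct j, k ∈ S, it is not the case that both Re d_j + Im d_j > C and Re d_k + Im d_k > C. -/

import Mathlib

/-- A feasible C-KP solution contains at most one demand in the region `D₂`:
if `S` is feasible (the magnitude of the demand sum is at most `C`), then any
two members of `S` whose demands satisfy `Re + Im > C` must coincide. -/
theorem at_most_one_in_D2 {K : Type*} [Fintype K] (C : ℝ) (hC : 0 < C)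
    (d : K → ℂ) (hre : ∀ k, 0 ≤ (d k).re) (him : ∀ k, 0 ≤ (d k).im)
    (S : Finset K) (hS : ‖∑ k ∈ S, d k‖ ≤ C) :
    ∀ j ∈ S, ∀ k ∈ S,
      C < (d j).re + (d j).im → C < (d k).re + (d k).im → j = k := by
  classical
  intro j hj k hk hjd hkd
  by_contra hne
  have hsub : ({j, k} : Finset K) ⊆ S := by
    intro x hx
    rcases Finset.mem_insert.mp hx with h | h
    · exact h ▸ hj
    · exact (Finset.mem_singleton.mp h) ▸ hk
  have hre_sum : (d j).re + (d k).re ≤ (∑ x ∈ S, d x).re := by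
    rw [Complex.re_sum]
    calc (d j).re + (d k).re = ∑ x ∈ ({j, k} : Finset K), (d x).re := by
          rw [Finset.sum_pair hne]
      _ ≤ ∑ x ∈ S, (d x).re :=
          Finset.sum_le_sum_of_subset_of_nonneg hsub (fun i _ _ => hre i)
  have him_sum : (d j).im + (d k).im ≤ (∑ x ∈ S, d x).im := by
    rw [Complex.im_sum]
    calc (d j).im + (d k).im = ∑ x ∈ ({j, k} : Finset K), (d x).im := by
          rw [Finset.sum_pair hne]
      _ ≤ ∑ x ∈ S, (d x).im :=
          Finset.sum_le_sum_of_subset_of_nonneg hsub (fun i _ _ => him i)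
  have h1 : (∑ x ∈ S, d x).re ≤ ‖∑ x ∈ S, d x‖ := Complex.re_le_norm _
  have h2 : (∑ x ∈ S, d x).im ≤ ‖∑ x ∈ S, d x‖ := Complex.im_le_norm _
  linarith
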